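/- A compact topological group T is topologically cyclic (i.e., contains an element g with ⟨g⟩ dense in T) if and only if T is isomorphic as a topological group to 𝕋^m × ℤ/ℓℤ for some m ≥ 0 and ℓ ≥ 1, where T is assumed to be a compact abelian Lie group. -/

import Mathlib

open MeasureTheory Set Function Filter Topology Submodule
open scoped ComplexConjugate

namespace KroneckerAux

instance : Fact ((0:ℝ) < 1) := ⟨one_pos⟩

noncomputable section

local notation "𝕋" => AddCircle (1:ℝ)

instance : IsProbabilityMeasure (volume : Measure 𝕋) :=
  ⟨by simp⟩

variable {m : ℕ}

/-- Characters of the torus. -/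
def chi (m : ℕ) (k : Fin m → ℤ) : C(Fin m → 𝕋, ℂ) :=
  ⟨fun x => ∏ i, fourier (k i) (x i),
   continuous_finset_prod _ fun i _ => (fourier (k i)).continuous.comp (continuous_apply i)⟩

lemma chi_apply (k : Fin m → ℤ) (x : Fin m → 𝕋) : chi m k x = ∏ i, fourier (k i) (x i) := rfl

lemma chi_zero : chi m 0 = 1 := by
  ext x
  simp [chi_apply, fourier_zero]

lemma chi_mul (k l : Fin m → ℤ) : chi m k * chi m l = chi m (k + l) := by
  ext x
  simp only [ContinuousMap.mul_apply, chi_apply, ← Finset.prod_mul_distrib, Pi.add_apply]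
  exact Finset.prod_congr rfl fun i _ => (fourier_add).symm

lemma chi_map_add (k : Fin m → ℤ) (x y : Fin m → 𝕋) :
    chi m k (x + y) = chi m k x * chi m k y := by
  simp only [chi_apply, Pi.add_apply, ← Finset.prod_mul_distrib]
  refine Finset.prod_congr rfl fun i _ => ?_
  rw [fourier_apply, fourier_apply, fourier_apply, smul_add, AddCircle.toCircle_add,
    Circle.coe_mul]

lemma chi_map_zero (k : Fin m → ℤ) : chi m k 0 = 1 := by
  simp [chi_apply, Pi.zero_apply, fourier_eval_zero]

lemma chi_nsmul (k : Fin m → ℤ) (g : Fin m → 𝕋) (n : ℕ) :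
    chi m k (n • g) = chi m k g ^ n := by
  induction n with
  | zero => simpa using chi_map_zero k
  | succ n ih => rw [succ_nsmul, chi_map_add, ih, pow_succ]

lemma norm_chi_apply (k : Fin m → ℤ) (x : Fin m → 𝕋) : ‖chi m k x‖ = 1 := by
  rw [chi_apply, norm_prod]
  exact Finset.prod_eq_one fun i _ => by rw [fourier_apply]; exact Circle.norm_coe _

/-- The star subalgebra generated by the characters. -/
def chiAlg (m : ℕ) : StarSubalgebra ℂ C(Fin m → 𝕋, ℂ) where
  toSubalgebra := Algebra.adjoin ℂ (range (chi m))
  star_mem' := by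
    show Algebra.adjoin ℂ (range (chi m)) ≤ star (Algebra.adjoin ℂ (range (chi m)))
    refine Algebra.adjoin_le ?_
    rintro - ⟨k, rfl⟩
    refine Algebra.subset_adjoin ⟨-k, ?_⟩
    ext1 x
    show chi m (-k) x = (starRingEnd ℂ) (chi m k x)
    rw [chi_apply, chi_apply, map_prod]
    exact Finset.prod_congr rfl fun i _ => by
      simpa using (fourier_neg (n := k i) (x := x i))

lemma chiAlg_coe (m : ℕ) :
    Subalgebra.toSubmodule (chiAlg m).toSubalgebra = span ℂ (range (chi m)) := by
  apply Algebra.adjoin_eq_span_of_subset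
  refine Subset.trans ?_ Submodule.subset_span
  intro x hx
  refine Submonoid.closure_induction (fun _ => id) ⟨0, chi_zero⟩ ?_ hx
  rintro - - - - ⟨k, rfl⟩ ⟨l, rfl⟩
  exact ⟨k + l, (chi_mul k l).symm⟩

lemma chiAlg_separatesPoints (m : ℕ) : (chiAlg m).SeparatesPoints := by
  intro x y hxy
  obtain ⟨i, hi⟩ : ∃ i, x i ≠ y i := by
    by_contra h
    push_neg at h
    exact hxy (funext h)
  refine ⟨_, ⟨chi m (Pi.single i 1), Algebra.subset_adjoin ⟨_, rfl⟩, rfl⟩, ?_⟩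
  have hx : ∀ z : Fin m → 𝕋, chi m (Pi.single i 1) z = fourier 1 (z i) := by
    intro z
    rw [chi_apply]
    rw [Finset.prod_eq_single i
      (fun j _ hj => by rw [Pi.single_eq_of_ne hj]; exact fourier_zero)
      (by intro h; exact absurd (Finset.mem_univ i) h)]
    rw [Pi.single_eq_same]
  show chi m (Pi.single i 1) x ≠ chi m (Pi.single i 1) y
  rw [hx, hx, fourier_one, fourier_one]
  simp only [ne_eq, Subtype.coe_inj]
  exact fun h => hi (AddCircle.injective_toCircle one_ne_zero (Circle.ext h))

lemma chiAlg_closure_eq_top (m : ℕ) : (chiAlg m).topologicalClosure = ⊤ :=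
  ContinuousMap.starSubalgebra_topologicalClosure_eq_top_of_separatesPoints _
    (chiAlg_separatesPoints m)

lemma span_chi_closure_eq_top (m : ℕ) :
    (span ℂ (range (chi m))).topologicalClosure = ⊤ := by
  rw [← chiAlg_coe]
  exact congr_arg (Subalgebra.toSubmodule <| StarSubalgebra.toSubalgebra ·)
    (chiAlg_closure_eq_top m)


lemma integral_fourier_eq_zero {n : ℤ} (hn : n ≠ 0) :
    ∫ x : 𝕋, fourier n x = 0 := by
  rw [← AddCircle.intervalIntegral_preimage 1 0 (fun x => fourier n x)]
  have hc : (2 * Real.pi * Complex.I * n : ℂ) ≠ 0 := by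
    simp [Real.pi_ne_zero, Complex.I_ne_zero, hn]
  have deriv : ∀ x ∈ uIcc (0:ℝ) (0+1), HasDerivAt
      (fun y : ℝ => (2 * Real.pi * Complex.I * n : ℂ)⁻¹ * fourier n (y : 𝕋))
      (fourier n (x : 𝕋)) x := by
    intro x _
    have h := (hasDerivAt_fourier 1 n x).const_mul ((2 * Real.pi * Complex.I * n : ℂ)⁻¹)
    have h2 : (2 * Real.pi * Complex.I * n : ℂ)⁻¹ *
        (2 * Real.pi * Complex.I * n / (1:ℝ) * fourier n (x : 𝕋)) = fourier n (x : 𝕋) := by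
      rw [Complex.ofReal_one, div_one, ← mul_assoc, inv_mul_cancel₀ hc, one_mul]
    exact h2 ▸ h
  rw [intervalIntegral.integral_eq_sub_of_hasDerivAt deriv
    (((fourier n).continuous.comp (AddCircle.continuous_mk' 1)).intervalIntegrable 0 (0+1))]
  have h01 : ((0:ℝ)+1 : ℝ) = (1:ℝ) := by norm_num
  rw [h01]
  have : ((1:ℝ) : 𝕋) = ((0:ℝ) : 𝕋) := by
    simp [AddCircle.coe_period]
  rw [this, sub_self]

lemma integral_chi (k : Fin m → ℤ) :
    ∫ x : Fin m → 𝕋, chi m k x = if k = 0 then 1 else 0 := by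
  have h : ∫ x : Fin m → 𝕋, chi m k x = ∏ i, ∫ x : 𝕋, fourier (k i) x := by
    simp only [chi_apply]
    exact integral_fintype_prod_eq_prod fun i x => fourier (k i) x
  rw [h]
  by_cases hk : k = 0
  · subst hk
    rw [if_pos rfl]
    rw [Finset.prod_eq_one fun i _ => ?_]
    have h0 : ∀ x : 𝕋, fourier ((0 : Fin m → ℤ) i) x = (1:ℂ) := fun x => by
      rw [Pi.zero_apply]; exact fourier_zero
    simp only [h0]
    simp
  · rw [if_neg hk]
    obtain ⟨i, hi⟩ : ∃ i, k i ≠ 0 := by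
      by_contra h'
      push_neg at h'
      exact hk (funext h')
    exact Finset.prod_eq_zero (Finset.mem_univ i) (integral_fourier_eq_zero hi)

lemma tendsto_avg_pow_of_ne_one {z : ℂ} (hz : ‖z‖ = 1) (h1 : z ≠ 1) :
    Tendsto (fun N : ℕ => (N : ℂ)⁻¹ * ∑ n ∈ Finset.range N, z ^ n) atTop (𝓝 0) := by
  have hz1 : (0:ℝ) < ‖z - 1‖ := by
    rw [norm_pos_iff]
    exact sub_ne_zero.mpr h1
  apply squeeze_zero_norm (a := fun N : ℕ => (N : ℝ)⁻¹ * (2 / ‖z - 1‖))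
  · intro N
    rw [geom_sum_eq h1, norm_mul, norm_div, norm_inv, Complex.norm_natCast]
    gcongr
    calc ‖z ^ N - 1‖ ≤ ‖z ^ N‖ + ‖(1:ℂ)‖ := norm_sub_le _ _
    _ = 2 := by rw [norm_pow, hz, one_pow, norm_one]; norm_num
  · have h2 : Tendsto (fun N : ℕ => (N:ℝ)⁻¹) atTop (𝓝 0) :=
      tendsto_inv_atTop_zero.comp tendsto_natCast_atTop_atTop
    simpa using h2.mul_const (2 / ‖z - 1‖)

lemma tendsto_avg_pow_one :
    Tendsto (fun N : ℕ => (N : ℂ)⁻¹ * ∑ n ∈ Finset.range N, (1:ℂ) ^ n) atTop (𝓝 1) := by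
  apply Tendsto.congr' (f₁ := fun _ : ℕ => (1:ℂ))
  · filter_upwards [eventually_ge_atTop 1] with N hN
    have hN' : (N : ℂ) ≠ 0 := Nat.cast_ne_zero.mpr (by omega)
    simp [Finset.sum_const, inv_mul_cancel₀ hN']
  · exact tendsto_const_nhds
lemma chi_integrable (P : C(Fin m → 𝕋, ℂ)) : Integrable (fun x => P x) volume :=
  P.continuous.integrable_of_hasCompactSupport (HasCompactSupport.of_compactSpace _)

lemma tendsto_avg_chi (g : Fin m → 𝕋) (Hg : ∀ k : Fin m → ℤ, chi m k g = 1 → k = 0)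
    (k : Fin m → ℤ) :
    Tendsto (fun N : ℕ => (N:ℂ)⁻¹ * ∑ n ∈ Finset.range N, chi m k (n • g)) atTop
      (𝓝 (∫ x : Fin m → 𝕋, chi m k x)) := by
  simp only [chi_nsmul]
  rw [integral_chi]
  by_cases hk : k = 0
  · rw [if_pos hk]
    subst hk
    have h1 : chi m 0 g = 1 := by rw [chi_zero]; rfl
    simp only [h1]
    exact tendsto_avg_pow_one
  · rw [if_neg hk]
    exact tendsto_avg_pow_of_ne_one (norm_chi_apply k g) (fun h => hk (Hg k h))

lemma tendsto_avg_span {P : C(Fin m → 𝕋, ℂ)} (hP : P ∈ span ℂ (range (chi m)))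
    (g : Fin m → 𝕋) (Hg : ∀ k : Fin m → ℤ, chi m k g = 1 → k = 0) :
    Tendsto (fun N : ℕ => (N:ℂ)⁻¹ * ∑ n ∈ Finset.range N, P (n • g)) atTop
      (𝓝 (∫ x : Fin m → 𝕋, P x)) := by
  obtain ⟨n, c, v, hPeq⟩ := mem_span_set'.mp hP
  have hκ : ∀ i : Fin n, ∃ k : Fin m → ℤ, chi m k = (v i : C(Fin m → 𝕋, ℂ)) :=
    fun i => (v i).2
  choose κ hκ using hκ
  have hPx : ∀ x, P x = ∑ i : Fin n, c i * chi m (κ i) x := by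
    intro x
    rw [← hPeq]
    simp only [ContinuousMap.coe_sum, Finset.sum_apply, ContinuousMap.coe_smul, Pi.smul_apply,
      smul_eq_mul]
    exact Finset.sum_congr rfl fun i _ => by rw [hκ]
  have hInt : ∫ x : Fin m → 𝕋, P x = ∑ i : Fin n, c i * ∫ x : Fin m → 𝕋, chi m (κ i) x := by
    simp only [hPx]
    rw [integral_finset_sum]
    · exact Finset.sum_congr rfl fun i _ => by
        rw [MeasureTheory.integral_const_mul]
    · exact fun i _ => (chi_integrable (c i • chi m (κ i))).congr
        (by filter_upwards with x; simp)
  rw [hInt]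
  have havg : ∀ N : ℕ, (N:ℂ)⁻¹ * ∑ n' ∈ Finset.range N, P (n' • g) =
      ∑ i : Fin n, c i * ((N:ℂ)⁻¹ * ∑ n' ∈ Finset.range N, chi m (κ i) (n' • g)) := by
    intro N
    simp only [hPx]
    rw [Finset.sum_comm]
    rw [Finset.mul_sum]
    exact Finset.sum_congr rfl fun i _ => by
      rw [Finset.mul_sum, Finset.mul_sum, Finset.mul_sum]
      exact Finset.sum_congr rfl fun j _ => by ring
  simp only [havg]
  exact tendsto_finset_sum _ fun i _ => (tendsto_avg_chi g Hg (κ i)).const_mul (c i)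

lemma chi_coe_val (k : Fin m → ℤ) (α : Fin m → ℝ) :
    chi m k (fun i => ((α i : ℝ) : 𝕋)) =
      Complex.exp (2 * Real.pi * Complex.I * (∑ i, (k i : ℝ) * α i)) := by
  rw [chi_apply]
  have h1 : ∀ i : Fin m, fourier (k i) (((α i : ℝ) : 𝕋)) =
      Complex.exp (2 * Real.pi * Complex.I * ((k i : ℝ) * α i)) := by
    intro i
    rw [fourier_coe_apply]
    push_cast
    ring_nf
  simp only [h1]
  rw [← Complex.exp_sum]
  congr 1
  rw [← Finset.mul_sum]
  push_cast
  ring_nf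

theorem dense_zmultiples_of_indep (α : Fin m → ℝ)
    (hα : ∀ (k : Fin m → ℤ) (z : ℤ), (∑ i, (k i : ℝ) * α i) = (z : ℝ) → k = 0) :
    Dense ((AddSubgroup.zmultiples (fun i => ((α i : ℝ) : 𝕋)) :
      AddSubgroup (Fin m → 𝕋)) : Set (Fin m → 𝕋)) := by
  set g : Fin m → 𝕋 := fun i => ((α i : ℝ) : 𝕋) with hgdef
  set S : Set (Fin m → 𝕋) :=
    ((AddSubgroup.zmultiples g : AddSubgroup (Fin m → 𝕋)) : Set (Fin m → 𝕋)) with hSdef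
  have Hg : ∀ k : Fin m → ℤ, chi m k g = 1 → k = 0 := by
    intro k hk
    rw [chi_coe_val] at hk
    obtain ⟨z, hz⟩ := Complex.exp_eq_one_iff.mp hk
    have h2 : (2 * Real.pi * Complex.I : ℂ) ≠ 0 := by
      simp [Real.pi_ne_zero, Complex.I_ne_zero]
    have hz' : ((∑ i, (k i : ℝ) * α i : ℝ) : ℂ) = (z : ℂ) := by
      apply mul_left_cancel₀ h2
      rw [mul_comm (z:ℂ) (2 * Real.pi * Complex.I)] at hz
      push_cast
      push_cast at hz
      linear_combination hz
    have : (∑ i, (k i : ℝ) * α i) = (z : ℝ) := by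
      exact_mod_cast hz'
    exact hα k z this
  by_contra hne
  obtain ⟨x, hx⟩ : ∃ x, x ∉ closure S := by
    by_contra h
    push_neg at h
    exact hne h
  -- Urysohn
  obtain ⟨f, hf0, hf1, hficc⟩ :=
    exists_continuous_zero_one_of_isClosed (isClosed_closure (s := S))
      (isClosed_singleton (x := x)) (disjoint_singleton_right.mpr hx)
  have hfnonneg : ∀ y, 0 ≤ f y := fun y => (hficc y).1
  have hfint : Integrable (fun y => f y) volume :=
    f.continuous.integrable_of_hasCompactSupport (HasCompactSupport.of_compactSpace _)
  have hIpos : 0 < ∫ y, f y := by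
    rw [integral_pos_iff_support_of_nonneg hfnonneg hfint]
    have hopen : IsOpen (support ⇑f) := f.continuous.isOpen_support
    refine hopen.measure_pos volume ⟨x, ?_⟩
    simp only [mem_support]
    rw [hf1 (mem_singleton x)]
    norm_num
  set I : ℝ := ∫ y, f y with hI
  set ε : ℝ := I / 3 with hε
  have hεpos : 0 < ε := by positivity
  set fc : C(Fin m → 𝕋, ℂ) :=
    ⟨fun y => ((f y : ℝ) : ℂ), Complex.continuous_ofReal.comp f.continuous⟩ with hfc
  have hfc_mem : fc ∈ closure ((span ℂ (range (chi m)) : Submodule ℂ _) :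
      Set C(Fin m → 𝕋, ℂ)) := by
    have h1 : fc ∈ (span ℂ (range (chi m))).topologicalClosure := by
      rw [span_chi_closure_eq_top]; trivial
    rwa [← Submodule.topologicalClosure_coe]
  obtain ⟨P, hPmem, hPdist⟩ := Metric.mem_closure_iff.mp hfc_mem ε hεpos
  have hnorm_le : ‖fc - P‖ ≤ ε := by
    rw [← dist_eq_norm]
    exact le_of_lt hPdist
  have hvanish : ∀ n : ℕ, ‖P (n • g)‖ ≤ ε := by
    intro n
    have hmem : (n • g : Fin m → 𝕋) ∈ closure S := by
      apply subset_closure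
      exact ⟨n, natCast_zsmul g n⟩
    have h0 : fc (n • g) = 0 := by
      show ((f (n • g) : ℝ) : ℂ) = 0
      rw [hf0 hmem]
      simp
    calc ‖P (n • g)‖ = ‖fc (n • g) - P (n • g)‖ := by rw [h0, zero_sub, norm_neg]
    _ = ‖(fc - P) (n • g)‖ := by rw [ContinuousMap.sub_apply]
    _ ≤ ‖fc - P‖ := ContinuousMap.norm_coe_le_norm _ _
    _ ≤ ε := hnorm_le
  have hlim := tendsto_avg_span hPmem g Hg
  have hIntP : ‖∫ y : Fin m → 𝕋, P y‖ ≤ ε := by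
    apply le_of_tendsto hlim.norm
    filter_upwards [eventually_ge_atTop 1] with N hN
    have hNpos : (0:ℝ) < N := by exact_mod_cast hN
    calc ‖(N:ℂ)⁻¹ * ∑ n ∈ Finset.range N, P (n • g)‖
        ≤ ‖(N:ℂ)⁻¹‖ * ∑ n ∈ Finset.range N, ‖P (n • g)‖ := by
          rw [norm_mul]
          gcongr
          exact norm_sum_le _ _
    _ ≤ (N:ℝ)⁻¹ * (N * ε) := by
          rw [norm_inv, Complex.norm_natCast]
          gcongr
          calc ∑ n ∈ Finset.range N, ‖P (n • g)‖ ≤ ∑ _n ∈ Finset.range N, ε :=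
            Finset.sum_le_sum fun n _ => hvanish n
          _ = N * ε := by rw [Finset.sum_const, Finset.card_range, nsmul_eq_mul]
    _ = ε := by field_simp
  have hclose : ‖(∫ y : Fin m → 𝕋, fc y) - ∫ y : Fin m → 𝕋, P y‖ ≤ ε := by
    rw [← integral_sub (chi_integrable fc) (chi_integrable P)]
    have hb : ∀ y : Fin m → 𝕋, ‖fc y - P y‖ ≤ ε := by
      intro y
      calc ‖fc y - P y‖ = ‖(fc - P) y‖ := by rw [ContinuousMap.sub_apply]
      _ ≤ ‖fc - P‖ := ContinuousMap.norm_coe_le_norm _ _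
      _ ≤ ε := hnorm_le
    calc ‖∫ y : Fin m → 𝕋, (fc y - P y)‖ ≤ ε * (volume (univ : Set (Fin m → 𝕋))).toReal :=
      norm_integral_le_of_norm_le_const (Eventually.of_forall hb)
    _ = ε := by simp
  have hReal : (∫ y : Fin m → 𝕋, fc y) = ((I : ℝ) : ℂ) := by
    show (∫ y : Fin m → 𝕋, ((f y : ℝ) : ℂ)) = _
    exact integral_ofReal (f := fun y : Fin m → 𝕋 => f y) (𝕜 := ℂ)
  have : I ≤ 2 * ε := by
    have h1 : ‖((I:ℝ):ℂ)‖ = I := by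
      rw [Complex.norm_real, Real.norm_eq_abs, abs_of_pos hIpos]
    calc I = ‖((I:ℝ):ℂ)‖ := h1.symm
    _ ≤ ‖((I:ℝ):ℂ) - ∫ y : Fin m → 𝕋, P y‖ + ‖∫ y : Fin m → 𝕋, P y‖ := by
        simpa using norm_add_le (((I:ℝ):ℂ) - ∫ y : Fin m → 𝕋, P y) (∫ y : Fin m → 𝕋, P y)
    _ ≤ ε + ε := by
        refine add_le_add ?_ hIntP
        rw [← hReal]
        exact hclose
    _ = 2 * ε := by ring
  rw [hε] at this
  linarith

lemma indep_powers {ξ : ℝ} (hξ : Transcendental ℤ ξ) {m : ℕ} (c : ℤ) (hc : c ≠ 0)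
    (k : Fin m → ℤ) (z : ℤ)
    (h : ∑ i, (k i : ℝ) * ((c : ℝ) * ξ ^ (i.val + 1)) = (z : ℝ)) : k = 0 := by
  set p : Polynomial ℤ :=
    (∑ i : Fin m, Polynomial.C (c * k i) * Polynomial.X ^ (i.val + 1)) - Polynomial.C z with hp
  have hev : (Polynomial.aeval ξ) p = 0 := by
    rw [hp]
    rw [map_sub, map_sum]
    simp only [map_mul, map_pow, Polynomial.aeval_C, Polynomial.aeval_X]
    have : ∀ i : Fin m, (algebraMap ℤ ℝ) c * (algebraMap ℤ ℝ) (k i) * ξ ^ (i.val + 1) =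
        (k i : ℝ) * ((c : ℝ) * ξ ^ (i.val + 1)) := by
      intro i
      simp only [eq_intCast]
      push_cast
      ring
    rw [Finset.sum_congr rfl fun i _ => this i, h]
    simp [eq_intCast]
  have hp0 : p = 0 := by
    by_contra hne
    exact hξ ⟨p, hne, hev⟩
  funext i
  have hcoeff : p.coeff (i.val + 1) = c * k i := by
    rw [hp, Polynomial.coeff_sub, Polynomial.finset_sum_coeff]
    have : ∀ j : Fin m, (Polynomial.C (c * k j) * Polynomial.X ^ (j.val + 1)).coeff (i.val + 1) =
        if j = i then c * k j else 0 := by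
      intro j
      rw [Polynomial.coeff_C_mul, Polynomial.coeff_X_pow]
      by_cases hji : j = i
      · subst hji; simp
      · have : ¬(i.val + 1 = j.val + 1) := by
          simp only [add_left_inj]
          exact fun hh => hji (Fin.ext hh.symm)
        rw [if_neg this, if_neg hji, mul_zero]
    rw [Finset.sum_congr rfl fun j _ => this j, Finset.sum_ite_eq' Finset.univ i
      (fun j => c * k j)]
    rw [if_pos (Finset.mem_univ i)]
    rw [Polynomial.coeff_C, if_neg (by omega), sub_zero]
  rw [hp0, Polynomial.coeff_zero] at hcoeff
  have := hcoeff.symm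
  rcases mul_eq_zero.mp this with h1 | h1
  · exact absurd h1 hc
  · exact h1

lemma dense_zmultiples_prod {X : Type*} [AddCommGroup X] [TopologicalSpace X]
    [IsTopologicalAddGroup X] (g : X) (ℓ : ℕ) [NeZero ℓ]
    (hg : ∀ j : ℤ, Dense ((fun t : ℤ => j • g + t • ((ℓ:ℤ) • g)) '' univ)) :
    Dense ((AddSubgroup.zmultiples ((g, 1) : X × ZMod ℓ) :
      AddSubgroup (X × ZMod ℓ)) : Set (X × ZMod ℓ)) := by
  rw [dense_iff_inter_open]
  rintro o ho ⟨p, hp⟩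
  obtain ⟨U, V, hU, hV, hxU, hjV, hUV⟩ := isOpen_prod_iff.mp ho p.1 p.2 hp
  set j : ℤ := ((p.2).val : ℤ) with hj
  have hdense := hg j
  obtain ⟨y, hyU, t, -, hyt⟩ := (hdense.inter_open_nonempty U hU ⟨p.1, hxU⟩)
  set n : ℤ := j + ℓ * t with hn
  refine ⟨n • ((g, 1) : X × ZMod ℓ), ?_, AddSubgroup.mem_zmultiples_iff.mpr ⟨n, rfl⟩⟩
  apply hUV
  constructor
  · show n • g ∈ U
    have : n • g = j • g + t • ((ℓ:ℤ) • g) := by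
      rw [hn, add_smul, smul_smul, mul_comm (ℓ:ℤ) t]
    rw [this]
    have hyt' : j • g + t • ((ℓ:ℤ) • g) = y := hyt
    rw [hyt']
    exact hyU
  · show n • (1 : ZMod ℓ) ∈ V
    have h1 : n • (1 : ZMod ℓ) = ((n : ℤ) : ZMod ℓ) := by
      rw [zsmul_eq_mul, mul_one]
    have h2 : ((n : ℤ) : ZMod ℓ) = p.2 := by
      rw [hn]
      push_cast
      rw [ZMod.natCast_self]
      simp [hj, ZMod.intCast_cast, ZMod.natCast_val, ZMod.cast_id]
    rw [h1, h2]
    exact hjV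

end
end KroneckerAux

/-- A compact abelian Lie group `T` (i.e. a compact abelian topological group that is
isomorphic, as a topological group, to `𝕋^m × F` with `F` finite) is topologically
cyclic — contains an element generating a dense subgroup — if and only if it is
isomorphic as a topological group to `𝕋^{m'} × ℤ/ℓℤ` for some `m' ≥ 0`, `ℓ ≥ 1`. -/
theorem topologicallyCyclic_iff_torus_times_finite_cyclic
    (T : Type) [AddCommGroup T] [TopologicalSpace T] [IsTopologicalAddGroup T]
    [CompactSpace T]
    (m : ℕ) (F : Type) [AddCommGroup F] [Fintype F] [TopologicalSpace F]
    [DiscreteTopology F]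
    (e : T ≃ₜ ((Fin m → AddCircle (1 : ℝ)) × F))
    (he : ∀ x y : T, e (x + y) = e x + e y) :
    (∃ g : T, Dense ((AddSubgroup.zmultiples g : AddSubgroup T) : Set T)) ↔
      ∃ (m' ℓ : ℕ), 0 < ℓ ∧
        ∃ e' : T ≃ₜ ((Fin m' → AddCircle (1 : ℝ)) × ZMod ℓ),
          ∀ x y : T, e' (x + y) = e' x + e' y := by
  constructor
  · rintro ⟨g, hg⟩
    have hE : ∀ n : ℤ, e (n • g) = n • e g :=
      fun n => map_zsmul (AddMonoidHom.mk' (fun t => e t) he) n g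
    have hcyc : IsAddCyclic F := by
      constructor
      refine ⟨(e g).2, fun x => AddSubgroup.mem_zmultiples_iff.mpr ?_⟩
      have hW : IsOpen (⇑e ⁻¹' (Set.univ ×ˢ ({x} : Set F))) :=
        (isOpen_univ.prod (isOpen_discrete _)).preimage e.continuous
      have hWne : (⇑e ⁻¹' (Set.univ ×ˢ ({x} : Set F))).Nonempty :=
        ⟨e.symm (0, x), by simp⟩
      obtain ⟨t, htW, htS⟩ := hg.inter_open_nonempty _ hW hWne
      obtain ⟨n, rfl⟩ := AddSubgroup.mem_zmultiples_iff.mp htS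
      refine ⟨n, ?_⟩
      have h2 : (e (n • g)).2 = x := (Set.mem_prod.mp htW).2
      rw [hE n] at h2
      exact h2
    haveI : Nonempty F := ⟨0⟩
    have hℓ : 0 < Nat.card F := Nat.card_pos
    set ψ := (zmodAddCyclicAddEquiv hcyc).symm with hψ
    set hF : F ≃ₜ ZMod (Nat.card F) :=
      { toEquiv := ψ.toEquiv,
        continuous_toFun := continuous_of_discreteTopology
        continuous_invFun := continuous_of_discreteTopology } with hFdef
    refine ⟨m, Nat.card F, hℓ, e.trans ((Homeomorph.refl _).prodCongr hF), ?_⟩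
    intro x y
    show (((e (x+y)).1, ψ ((e (x+y)).2)) : (Fin m → AddCircle (1:ℝ)) × ZMod (Nat.card F)) =
      ((e x).1, ψ ((e x).2)) + ((e y).1, ψ ((e y).2))
    rw [he x y, Prod.mk_add_mk]
    exact Prod.ext rfl (by rw [Prod.snd_add, map_add])
  · rintro ⟨m', ℓ, hℓ, e', he'⟩
    haveI : NeZero ℓ := ⟨hℓ.ne'⟩
    have hξ : Transcendental ℤ (liouvilleNumber 2) :=
      transcendental_liouvilleNumber le_rfl
    set ξ : ℝ := liouvilleNumber 2 with hξdef
    set α : Fin m' → ℝ := fun i => ξ ^ (i.val + 1) with hα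
    set g : Fin m' → AddCircle (1:ℝ) := fun i => ((α i : ℝ) : AddCircle (1:ℝ)) with hgdef
    have hℓg : (ℓ:ℤ) • g = fun i => (((ℓ:ℝ) * α i : ℝ) : AddCircle (1:ℝ)) := by
      funext i
      show (ℓ:ℤ) • ((α i : ℝ) : AddCircle (1:ℝ)) = _
      rw [← QuotientAddGroup.mk_zsmul]
      congr 1
      rw [zsmul_eq_mul]
      push_cast
      ring
    have hd : Dense ((AddSubgroup.zmultiples ((ℓ:ℤ) • g) :
        AddSubgroup (Fin m' → AddCircle (1:ℝ))) : Set (Fin m' → AddCircle (1:ℝ))) := by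
      rw [hℓg]
      apply KroneckerAux.dense_zmultiples_of_indep
      intro k z hkz
      refine KroneckerAux.indep_powers hξ (ℓ:ℤ) (by exact_mod_cast hℓ.ne') k z ?_
      rw [← hkz]
      push_cast
      rfl
    have hDtrans : ∀ j : ℤ, Dense ((fun t : ℤ => j • g + t • ((ℓ:ℤ) • g)) '' Set.univ) := by
      intro j
      have himg : ((fun t : ℤ => j • g + t • ((ℓ:ℤ) • g)) '' Set.univ) =
          (fun y => j • g + y) '' ((AddSubgroup.zmultiples ((ℓ:ℤ) • g) :
            AddSubgroup (Fin m' → AddCircle (1:ℝ))) : Set (Fin m' → AddCircle (1:ℝ))) := by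
        ext y
        simp only [Set.image_univ, Set.mem_range, Set.mem_image, SetLike.mem_coe,
          AddSubgroup.mem_zmultiples_iff]
        constructor
        · rintro ⟨t, rfl⟩
          exact ⟨t • ((ℓ:ℤ) • g), ⟨t, rfl⟩, rfl⟩
        · rintro ⟨w, ⟨t, rfl⟩, rfl⟩
          exact ⟨t, rfl⟩
      rw [himg]
      rw [dense_iff_closure_eq] at hd ⊢
      have hcoe : (fun y => j • g + y) = ⇑(Homeomorph.addLeft (j • g)) := rfl
      rw [hcoe]
      have := (Homeomorph.addLeft (j • g)).image_closure
        ((AddSubgroup.zmultiples ((ℓ:ℤ) • g) :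
            AddSubgroup (Fin m' → AddCircle (1:ℝ))) : Set (Fin m' → AddCircle (1:ℝ)))
      rw [← this, hd, Set.image_univ]
      exact (Homeomorph.addLeft (j • g)).surjective.range_eq
    have hdp := KroneckerAux.dense_zmultiples_prod g ℓ hDtrans
    have hsymm : ∀ a b, e'.symm (a + b) = e'.symm a + e'.symm b := fun a b => by
      apply e'.injective
      rw [he', e'.apply_symm_apply, e'.apply_symm_apply, e'.apply_symm_apply]
    have hEz : ∀ n : ℤ, e'.symm (n • ((g, (1 : ZMod ℓ)))) = n • e'.symm (g, 1) :=
      fun n => map_zsmul (AddMonoidHom.mk' (fun t => e'.symm t) hsymm) n (g, 1)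
    refine ⟨e'.symm (g, 1), ?_⟩
    have himg : ((AddSubgroup.zmultiples (e'.symm (g, 1)) : AddSubgroup T) : Set T) =
        ⇑e'.symm '' ((AddSubgroup.zmultiples ((g, (1 : ZMod ℓ)))) : Set _) := by
      ext t
      simp only [SetLike.mem_coe, AddSubgroup.mem_zmultiples_iff, Set.mem_image]
      constructor
      · rintro ⟨n, rfl⟩
        exact ⟨n • (g, 1), AddSubgroup.mem_zmultiples_iff.mpr ⟨n, rfl⟩, hEz n⟩
      · rintro ⟨y, hy, rfl⟩
        obtain ⟨n, rfl⟩ := AddSubgroup.mem_zmultiples_iff.mp hy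
        exact ⟨n, (hEz n).symm⟩
    rw [himg, dense_iff_closure_eq]
    rw [← (e'.symm).image_closure, dense_iff_closure_eq.mp hdp, Set.image_univ]
    exact (e'.symm).surjective.range_eq
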